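/- (Finitely additive Halmos–Savage theorem) Let A be an algebra of subsets of Ω and M ⊆ ba(A). Then M is dominated by some positive bounded finitely additive measure λ (i.e., μ ≪ λ for all μ ∈ M) if and only if there exists a sequence (μₙ) in M and weights αₙ ≥ 0, ∑ₙ αₙ = 1 such that every μ ∈ M is absolutely continuous with respect to m = ∑ₙ αₙ |μₙ|/(1 ∨ ‖μₙ‖). -/

import Mathlib

open Set Filter Topology

variable {Ω : Type*}

/-- `𝒜` is an algebra of subsets of `Ω`. -/
def IsAlg (𝒜 : Set (Set Ω)) : Prop :=
  ∅ ∈ 𝒜 ∧ Set.univ ∈ 𝒜 ∧ (∀ A ∈ 𝒜, Aᶜ ∈ 𝒜) ∧ ∀ A ∈ 𝒜, ∀ B ∈ 𝒜, A ∪ B ∈ 𝒜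

/-- bounded finitely additive set function (element of ba(𝒜)). -/
def IsFinAdd (𝒜 : Set (Set Ω)) (μ : Set Ω → ℝ) : Prop :=
  μ ∅ = 0 ∧
  (∀ A ∈ 𝒜, ∀ B ∈ 𝒜, Disjoint A B → μ (A ∪ B) = μ A + μ B) ∧
  ∃ C : ℝ, ∀ A ∈ 𝒜, |μ A| ≤ C

def IsPos (𝒜 : Set (Set Ω)) (μ : Set Ω → ℝ) : Prop := ∀ A ∈ 𝒜, 0 ≤ μ A

def IsCtblAdd (𝒜 : Set (Set Ω)) (μ : Set Ω → ℝ) : Prop :=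
  ∀ A : ℕ → Set Ω, (∀ n, A n ∈ 𝒜) → Pairwise (Function.onFun Disjoint A) →
    (⋃ n, A n) ∈ 𝒜 → HasSum (fun n => μ (A n)) (μ (⋃ n, A n))

/-- total variation of `μ` on `A`. -/
noncomputable def tv (𝒜 : Set (Set Ω)) (μ : Set Ω → ℝ) (A : Set Ω) : ℝ :=
  sSup {x | ∃ B ∈ 𝒜, B ⊆ A ∧ x = μ B - μ (A \ B)}

noncomputable def tvNorm (𝒜 : Set (Set Ω)) (μ : Set Ω → ℝ) : ℝ := tv 𝒜 μ Set.univ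

/-- `ν ≪ μ`, absolute continuity in the ε-δ sense. -/
def AC (𝒜 : Set (Set Ω)) (ν μ : Set Ω → ℝ) : Prop :=
  ∀ ε > (0:ℝ), ∃ δ > (0:ℝ), ∀ E ∈ 𝒜, tv 𝒜 μ E < δ → tv 𝒜 ν E < ε

/-- `μ ⊥ ν`, singularity in the ε sense. -/
def Sing (𝒜 : Set (Set Ω)) (μ ν : Set Ω → ℝ) : Prop :=
  ∀ ε > (0:ℝ), ∃ B ∈ 𝒜, tv 𝒜 μ Bᶜ + tv 𝒜 ν B < ε

/-- normalized total variation `|μ|/(1 ∨ ‖μ‖)`. -/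
noncomputable def nvar (𝒜 : Set (Set Ω)) (μ : Set Ω → ℝ) (A : Set Ω) : ℝ :=
  tv 𝒜 μ A / (1 ⊔ tvNorm 𝒜 μ)

/-- membership in `𝐀(M)`: countable convex combinations of normalized variations. -/
def MemAM (𝒜 : Set (Set Ω)) (M : Set (Set Ω → ℝ)) (m : Set Ω → ℝ) : Prop :=
  ∃ (μ : ℕ → Set Ω → ℝ) (α : ℕ → ℝ),
    (∀ n, μ n ∈ M) ∧ (∀ n, 0 ≤ α n) ∧ HasSum α 1 ∧
    ∀ A : Set Ω, m A = ∑' n, α n * nvar 𝒜 (μ n) A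

/-- membership in `𝐋(M)`. -/
def MemLM (𝒜 : Set (Set Ω)) (M : Set (Set Ω → ℝ)) (ν : Set Ω → ℝ) : Prop :=
  ∃ m, MemAM 𝒜 M m ∧ AC 𝒜 ν m

/-- order on ba(𝒜). -/
def baLE (𝒜 : Set (Set Ω)) (μ ν : Set Ω → ℝ) : Prop := ∀ A ∈ 𝒜, μ A ≤ ν A

/-- λ-completion of 𝒜. -/
def Completion (𝒜 : Set (Set Ω)) (l : Set Ω → ℝ) : Set (Set Ω) :=
  {B | ∀ ε > (0:ℝ), ∃ A ∈ 𝒜, ∃ A' ∈ 𝒜, A ⊆ B ∧ B ⊆ A' ∧ l (A' \ A) < ε}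

/-- the extension `λ̄` to the completion. -/
noncomputable def extOf (𝒜 : Set (Set Ω)) (l : Set Ω → ℝ) (B : Set Ω) : ℝ :=
  sSup {x | ∃ A ∈ 𝒜, A ⊆ B ∧ x = l A}

/-- λ-atom. -/
def IsLAtom (𝒜 : Set (Set Ω)) (l : Set Ω → ℝ) (B : Set Ω) : Prop :=
  B ∈ 𝒜 ∧ 0 < l B ∧ ∀ A ∈ 𝒜, A ⊆ B → l A = 0 ∨ l (B \ A) = 0

/-- simple 𝒜-measurable function. -/
def IsSimple (𝒜 : Set (Set Ω)) (f : Ω → ℝ) : Prop :=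
  (Set.range f).Finite ∧ ∀ c : ℝ, f ⁻¹' {c} ∈ 𝒜

/-- integral of a simple function. -/
noncomputable def simpleInt (μ : Set Ω → ℝ) (f : Ω → ℝ) : ℝ :=
  ∑ᶠ c : ℝ, c * μ (f ⁻¹' {c})

/-- outer measure associated with l on 𝒜. -/
noncomputable def outerOf (𝒜 : Set (Set Ω)) (l : Set Ω → ℝ) (S : Set Ω) : ℝ :=
  sInf {x | ∃ A ∈ 𝒜, S ⊆ A ∧ x = l A}

/-- Dunford–Schwartz approximating sequence for `f`. -/
def ApproxSeq (𝒜 : Set (Set Ω)) (l : Set Ω → ℝ) (f : Ω → ℝ) (g : ℕ → Ω → ℝ) : Prop :=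
  (∀ n, IsSimple 𝒜 (g n)) ∧
  (∀ ε > (0:ℝ), ∃ N, ∀ p ≥ N, ∀ q ≥ N, simpleInt l (fun x => |g p x - g q x|) < ε) ∧
  (∀ ε > (0:ℝ), Tendsto (fun n => outerOf 𝒜 l {x | ε ≤ |g n x - f x|}) atTop (nhds 0))

/-- membership in L¹(l). -/
def MemL1 (𝒜 : Set (Set Ω)) (l : Set Ω → ℝ) (f : Ω → ℝ) : Prop :=
  ∃ g, ApproxSeq 𝒜 l f g

/-- the Dunford–Schwartz integral. -/
noncomputable def dsInt (𝒜 : Set (Set Ω)) (l : Set Ω → ℝ) (f : Ω → ℝ) : ℝ :=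
  sInf {I | ∃ g, ApproxSeq 𝒜 l f g ∧ Tendsto (fun n => simpleInt l (g n)) atTop (nhds I)}

/-- L¹ seminorm distance. -/
noncomputable def l1dist (𝒜 : Set (Set Ω)) (l : Set Ω → ℝ) (f h : Ω → ℝ) : ℝ :=
  dsInt 𝒜 l (fun x => |f x - h x|)

/-- membership in the L¹(l)-closure of a set C of functions. -/
def InL1Closure (𝒜 : Set (Set Ω)) (l : Set Ω → ℝ) (C : Set (Ω → ℝ)) (f : Ω → ℝ) : Prop :=
  ∀ ε > (0:ℝ), ∃ h ∈ C, l1dist 𝒜 l f h < ε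

/-- the set C = K − Sim(𝒜)₊. -/
def ConeDiff (𝒜 : Set (Set Ω)) (K : Set (Ω → ℝ)) : Set (Ω → ℝ) :=
  {f | ∃ k ∈ K, ∃ s : Ω → ℝ, IsSimple 𝒜 s ∧ (∀ x, 0 ≤ s x) ∧ f = k - s}
section HSAux

variable {Ω : Type*} {𝒜 : Set (Set Ω)}

lemma alg_empty (hA : IsAlg 𝒜) : ∅ ∈ 𝒜 := hA.1
lemma alg_univ (hA : IsAlg 𝒜) : Set.univ ∈ 𝒜 := hA.2.1
lemma alg_compl (hA : IsAlg 𝒜) {A : Set Ω} (h : A ∈ 𝒜) : Aᶜ ∈ 𝒜 := hA.2.2.1 A h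
lemma alg_union (hA : IsAlg 𝒜) {A B : Set Ω} (h : A ∈ 𝒜) (h' : B ∈ 𝒜) : A ∪ B ∈ 𝒜 :=
  hA.2.2.2 A h B h'

lemma alg_inter (hA : IsAlg 𝒜) {A B : Set Ω} (h : A ∈ 𝒜) (h' : B ∈ 𝒜) : A ∩ B ∈ 𝒜 := by
  have := alg_compl hA (alg_union hA (alg_compl hA h) (alg_compl hA h'))
  simpa [Set.compl_union] using this

lemma alg_diff (hA : IsAlg 𝒜) {A B : Set Ω} (h : A ∈ 𝒜) (h' : B ∈ 𝒜) : A \ B ∈ 𝒜 := by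
  simpa [Set.diff_eq] using alg_inter hA h (alg_compl hA h')

/-- the defining set of `tv`. -/
lemma tv_set_nonempty (hA : IsAlg 𝒜) (μ : Set Ω → ℝ) (A : Set Ω) :
    {x | ∃ B ∈ 𝒜, B ⊆ A ∧ x = μ B - μ (A \ B)}.Nonempty :=
  ⟨μ ∅ - μ (A \ ∅), ⟨∅, alg_empty hA, Set.empty_subset A, rfl⟩⟩

lemma tv_set_bddAbove (hA : IsAlg 𝒜) {μ : Set Ω → ℝ} (hμ : IsFinAdd 𝒜 μ) {A : Set Ω}
    (hAm : A ∈ 𝒜) : BddAbove {x | ∃ B ∈ 𝒜, B ⊆ A ∧ x = μ B - μ (A \ B)} := by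
  obtain ⟨C, hC⟩ := hμ.2.2
  refine ⟨C + C, fun x hx => ?_⟩
  obtain ⟨B, hB, hBA, rfl⟩ := hx
  have h1 := hC B hB
  have h2 := hC (A \ B) (alg_diff hA hAm hB)
  have := abs_le.mp h1
  have := abs_le.mp h2
  linarith [ (abs_le.mp h1).2, (abs_le.mp h2).1 ]

lemma le_tv (hA : IsAlg 𝒜) {μ : Set Ω → ℝ} (hμ : IsFinAdd 𝒜 μ) {A B : Set Ω}
    (hAm : A ∈ 𝒜) (hB : B ∈ 𝒜) (hBA : B ⊆ A) : μ B - μ (A \ B) ≤ tv 𝒜 μ A :=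
  le_csSup (tv_set_bddAbove hA hμ hAm) ⟨B, hB, hBA, rfl⟩

lemma self_le_tv (hA : IsAlg 𝒜) {μ : Set Ω → ℝ} (hμ : IsFinAdd 𝒜 μ) {A : Set Ω}
    (hAm : A ∈ 𝒜) : μ A ≤ tv 𝒜 μ A := by
  have := le_tv hA hμ hAm hAm (subset_refl A)
  simpa [Set.diff_self, hμ.1] using this

lemma tv_nonneg (hA : IsAlg 𝒜) {μ : Set Ω → ℝ} (hμ : IsFinAdd 𝒜 μ) {A : Set Ω}
    (hAm : A ∈ 𝒜) : 0 ≤ tv 𝒜 μ A := by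
  have h1 := self_le_tv hA hμ hAm
  have h2 := le_tv hA hμ hAm (alg_empty hA) (Set.empty_subset A)
  simp only [hμ.1, Set.diff_empty, zero_sub] at h2
  linarith

lemma tv_empty (hA : IsAlg 𝒜) {μ : Set Ω → ℝ} (hμ : IsFinAdd 𝒜 μ) : tv 𝒜 μ ∅ = 0 := by
  have : {x | ∃ B ∈ 𝒜, B ⊆ (∅ : Set Ω) ∧ x = μ B - μ (∅ \ B)} = {0} := by
    ext x
    simp only [Set.mem_setOf_eq, Set.mem_singleton_iff]
    constructor
    · rintro ⟨B, hB, hBe, rfl⟩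
      have : B = ∅ := Set.subset_empty_iff.mp hBe
      subst this
      simp [hμ.1]
    · rintro rfl
      exact ⟨∅, alg_empty hA, subset_refl _, by simp [hμ.1]⟩
  rw [tv, this, csSup_singleton]

lemma tv_union (hA : IsAlg 𝒜) {μ : Set Ω → ℝ} (hμ : IsFinAdd 𝒜 μ) {A B : Set Ω}
    (hAm : A ∈ 𝒜) (hBm : B ∈ 𝒜) (hd : Disjoint A B) :
    tv 𝒜 μ (A ∪ B) = tv 𝒜 μ A + tv 𝒜 μ B := by
  have hUm : A ∪ B ∈ 𝒜 := alg_union hA hAm hBm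
  have hdis : ∀ x : Ω, x ∈ A → x ∉ B := fun x hx => Set.disjoint_left.mp hd hx
  apply le_antisymm
  · apply csSup_le (tv_set_nonempty hA μ _)
    rintro x ⟨C, hC, hCsub, rfl⟩
    have hCA : C ∩ A ∈ 𝒜 := alg_inter hA hC hAm
    have hCB : C ∩ B ∈ 𝒜 := alg_inter hA hC hBm
    have hCeq : C = (C ∩ A) ∪ (C ∩ B) := by
      ext y; simp only [Set.mem_union, Set.mem_inter_iff]
      constructor
      · intro hy
        rcases hCsub hy with h | h
        · exact Or.inl ⟨hy, h⟩
        · exact Or.inr ⟨hy, h⟩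
      · rintro (⟨h, _⟩ | ⟨h, _⟩) <;> exact h
    have hCd : Disjoint (C ∩ A) (C ∩ B) :=
      Set.disjoint_of_subset Set.inter_subset_right Set.inter_subset_right hd
    have hμC : μ C = μ (C ∩ A) + μ (C ∩ B) := by
      have h := hμ.2.1 _ hCA _ hCB hCd
      rw [← hCeq] at h
      exact h
    have hdiffeq : (A ∪ B) \ C = (A \ (C ∩ A)) ∪ (B \ (C ∩ B)) := by
      ext y
      simp only [Set.mem_diff, Set.mem_union, Set.mem_inter_iff]
      constructor
      · rintro ⟨h | h, hnc⟩
        · exact Or.inl ⟨h, fun hh => hnc hh.1⟩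
        · exact Or.inr ⟨h, fun hh => hnc hh.1⟩
      · rintro (⟨h, hn⟩ | ⟨h, hn⟩)
        · exact ⟨Or.inl h, fun hc => hn ⟨hc, h⟩⟩
        · exact ⟨Or.inr h, fun hc => hn ⟨hc, h⟩⟩
    have hAd : A \ (C ∩ A) ∈ 𝒜 := alg_diff hA hAm hCA
    have hBd : B \ (C ∩ B) ∈ 𝒜 := alg_diff hA hBm hCB
    have hdd : Disjoint (A \ (C ∩ A)) (B \ (C ∩ B)) :=
      Set.disjoint_of_subset Set.diff_subset Set.diff_subset hd
    have hμD : μ ((A ∪ B) \ C) = μ (A \ (C ∩ A)) + μ (B \ (C ∩ B)) := by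
      rw [hdiffeq]
      exact hμ.2.1 _ hAd _ hBd hdd
    have e1 : μ (C ∩ A) - μ (A \ (C ∩ A)) ≤ tv 𝒜 μ A :=
      le_tv hA hμ hAm hCA Set.inter_subset_right
    have e2 : μ (C ∩ B) - μ (B \ (C ∩ B)) ≤ tv 𝒜 μ B :=
      le_tv hA hμ hBm hCB Set.inter_subset_right
    rw [hμC, hμD]
    linarith
  · have key : tv 𝒜 μ A ≤ tv 𝒜 μ (A ∪ B) - tv 𝒜 μ B := by
      apply csSup_le (tv_set_nonempty hA μ A)
      rintro x ⟨B₁, hB₁, hB₁sub, rfl⟩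
      have key2 : tv 𝒜 μ B ≤ tv 𝒜 μ (A ∪ B) - (μ B₁ - μ (A \ B₁)) := by
        apply csSup_le (tv_set_nonempty hA μ B)
        rintro y ⟨B₂, hB₂, hB₂sub, rfl⟩
        rw [sub_le_iff_le_add] at *
        have hUn : B₁ ∪ B₂ ∈ 𝒜 := alg_union hA hB₁ hB₂
        have hd12 : Disjoint B₁ B₂ := Set.disjoint_of_subset hB₁sub hB₂sub hd
        have hμ12 : μ (B₁ ∪ B₂) = μ B₁ + μ B₂ := hμ.2.1 _ hB₁ _ hB₂ hd12
        have hdiffeq : (A ∪ B) \ (B₁ ∪ B₂) = (A \ B₁) ∪ (B \ B₂) := by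
          ext y
          simp only [Set.mem_diff, Set.mem_union]
          constructor
          · rintro ⟨h | h, hn⟩
            · exact Or.inl ⟨h, fun hh => hn (Or.inl hh)⟩
            · exact Or.inr ⟨h, fun hh => hn (Or.inr hh)⟩
          · rintro (⟨h, hn⟩ | ⟨h, hn⟩)
            · refine ⟨Or.inl h, ?_⟩
              rintro (hh | hh)
              · exact hn hh
              · exact hdis y h (hB₂sub hh)
            · refine ⟨Or.inr h, ?_⟩
              rintro (hh | hh)
              · exact hdis y (hB₁sub hh) h
              · exact hn hh
        have hdd : Disjoint (A \ B₁) (B \ B₂) :=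
          Set.disjoint_of_subset Set.diff_subset Set.diff_subset hd
        have hμD : μ ((A ∪ B) \ (B₁ ∪ B₂)) = μ (A \ B₁) + μ (B \ B₂) := by
          rw [hdiffeq]
          exact hμ.2.1 _ (alg_diff hA hAm hB₁) _ (alg_diff hA hBm hB₂) hdd
        have : μ (B₁ ∪ B₂) - μ ((A ∪ B) \ (B₁ ∪ B₂)) ≤ tv 𝒜 μ (A ∪ B) :=
          le_tv hA hμ hUm hUn (Set.union_subset_union hB₁sub hB₂sub)
        rw [hμ12, hμD] at this
        linarith
      linarith
    linarith

lemma tv_mono (hA : IsAlg 𝒜) {μ : Set Ω → ℝ} (hμ : IsFinAdd 𝒜 μ) {A B : Set Ω}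
    (hAm : A ∈ 𝒜) (hBm : B ∈ 𝒜) (hAB : A ⊆ B) : tv 𝒜 μ A ≤ tv 𝒜 μ B := by
  have h1 : tv 𝒜 μ B = tv 𝒜 μ A + tv 𝒜 μ (B \ A) := by
    rw [← tv_union hA hμ hAm (alg_diff hA hBm hAm) Set.disjoint_sdiff_right,
      Set.union_diff_cancel hAB]
  have h2 : 0 ≤ tv 𝒜 μ (B \ A) := tv_nonneg hA hμ (alg_diff hA hBm hAm)
  linarith

lemma tv_le_tvNorm (hA : IsAlg 𝒜) {μ : Set Ω → ℝ} (hμ : IsFinAdd 𝒜 μ) {A : Set Ω}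
    (hAm : A ∈ 𝒜) : tv 𝒜 μ A ≤ tvNorm 𝒜 μ :=
  tv_mono hA hμ hAm (alg_univ hA) (Set.subset_univ A)

/-- for a positive fin. additive μ, tv coincides with μ on 𝒜. -/
lemma tv_pos_eq (hA : IsAlg 𝒜) {μ : Set Ω → ℝ} (hμ : IsFinAdd 𝒜 μ) (hp : IsPos 𝒜 μ)
    {E : Set Ω} (hE : E ∈ 𝒜) : tv 𝒜 μ E = μ E := by
  apply le_antisymm
  · apply csSup_le (tv_set_nonempty hA μ E)
    rintro x ⟨B, hB, hBE, rfl⟩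
    have h1 : μ E = μ B + μ (E \ B) := by
      rw [← hμ.2.1 B hB (E \ B) (alg_diff hA hE hB) Set.disjoint_sdiff_right,
        Set.union_diff_cancel hBE]
    have h2 : 0 ≤ μ (E \ B) := hp _ (alg_diff hA hE hB)
    linarith
  · exact self_le_tv hA hμ hE

/-- monotonicity for positive finitely additive set functions. -/
lemma pos_mono (hA : IsAlg 𝒜) {m : Set Ω → ℝ} (hm : IsFinAdd 𝒜 m) (hp : IsPos 𝒜 m)
    {A B : Set Ω} (hAm : A ∈ 𝒜) (hBm : B ∈ 𝒜) (hAB : A ⊆ B) : m A ≤ m B := by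
  have h1 : m B = m A + m (B \ A) := by
    rw [← hm.2.1 A hAm (B \ A) (alg_diff hA hBm hAm) Set.disjoint_sdiff_right,
      Set.union_diff_cancel hAB]
  have h2 : 0 ≤ m (B \ A) := hp _ (alg_diff hA hBm hAm)
  linarith

lemma pos_subadd (hA : IsAlg 𝒜) {m : Set Ω → ℝ} (hm : IsFinAdd 𝒜 m) (hp : IsPos 𝒜 m)
    {A B : Set Ω} (hAm : A ∈ 𝒜) (hBm : B ∈ 𝒜) : m (A ∪ B) ≤ m A + m B := by
  have h1 : m (A ∪ B) = m A + m (B \ A) := by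
    have hset : A ∪ B = A ∪ (B \ A) := by
      ext x; simp only [Set.mem_union, Set.mem_diff]; tauto
    rw [hset]
    exact hm.2.1 A hAm (B \ A) (alg_diff hA hBm hAm) Set.disjoint_sdiff_right
  have h2 : m (B \ A) ≤ m B := pos_mono hA hm hp (alg_diff hA hBm hAm) hBm Set.diff_subset
  linarith

end HSAux

section HSAux2

variable {Ω : Type*} {𝒜 : Set (Set Ω)}

lemma nvar_denom_pos (μ : Set Ω → ℝ) : (0:ℝ) < 1 ⊔ tvNorm 𝒜 μ :=
  lt_of_lt_of_le one_pos le_sup_left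

lemma nvar_nonneg (hA : IsAlg 𝒜) {μ : Set Ω → ℝ} (hμ : IsFinAdd 𝒜 μ) {A : Set Ω}
    (hAm : A ∈ 𝒜) : 0 ≤ nvar 𝒜 μ A :=
  div_nonneg (tv_nonneg hA hμ hAm) (nvar_denom_pos μ).le

lemma nvar_le_one (hA : IsAlg 𝒜) {μ : Set Ω → ℝ} (hμ : IsFinAdd 𝒜 μ) {A : Set Ω}
    (hAm : A ∈ 𝒜) : nvar 𝒜 μ A ≤ 1 := by
  rw [nvar, div_le_one (nvar_denom_pos μ)]
  exact le_trans (tv_le_tvNorm hA hμ hAm) le_sup_right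

lemma nvar_empty (hA : IsAlg 𝒜) {μ : Set Ω → ℝ} (hμ : IsFinAdd 𝒜 μ) : nvar 𝒜 μ ∅ = 0 := by
  rw [nvar, tv_empty hA hμ, zero_div]

lemma nvar_union (hA : IsAlg 𝒜) {μ : Set Ω → ℝ} (hμ : IsFinAdd 𝒜 μ) {A B : Set Ω}
    (hAm : A ∈ 𝒜) (hBm : B ∈ 𝒜) (hd : Disjoint A B) :
    nvar 𝒜 μ (A ∪ B) = nvar 𝒜 μ A + nvar 𝒜 μ B := by
  rw [nvar, nvar, nvar, tv_union hA hμ hAm hBm hd, add_div]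

lemma tv_eq_nvar (μ : Set Ω → ℝ) (A : Set Ω) :
    tv 𝒜 μ A = (1 ⊔ tvNorm 𝒜 μ) * nvar 𝒜 μ A :=
  (mul_div_cancel₀ _ (nvar_denom_pos μ).ne').symm

/-- summability of the defining series of an element of 𝐀(M), on sets of 𝒜. -/
lemma memAM_summable (hA : IsAlg 𝒜) {M : Set (Set Ω → ℝ)} (hM : ∀ μ ∈ M, IsFinAdd 𝒜 μ)
    {μ : ℕ → Set Ω → ℝ} {α : ℕ → ℝ} (hμ : ∀ n, μ n ∈ M) (hα : ∀ n, 0 ≤ α n)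
    (hs : HasSum α 1) {A : Set Ω} (hAm : A ∈ 𝒜) :
    Summable (fun n => α n * nvar 𝒜 (μ n) A) := by
  apply Summable.of_nonneg_of_le
    (fun n => mul_nonneg (hα n) (nvar_nonneg hA (hM _ (hμ n)) hAm))
    (fun n => ?_) hs.summable
  calc α n * nvar 𝒜 (μ n) A ≤ α n * 1 :=
        mul_le_mul_of_nonneg_left (nvar_le_one hA (hM _ (hμ n)) hAm) (hα n)
    _ = α n := mul_one _

lemma memAM_nonneg (hA : IsAlg 𝒜) {M : Set (Set Ω → ℝ)} (hM : ∀ μ ∈ M, IsFinAdd 𝒜 μ)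
    {m : Set Ω → ℝ} (hm : MemAM 𝒜 M m) : IsPos 𝒜 m := by
  obtain ⟨μ, α, hμ, hα, hs, hval⟩ := hm
  intro A hAm
  rw [hval A]
  exact tsum_nonneg fun n => mul_nonneg (hα n) (nvar_nonneg hA (hM _ (hμ n)) hAm)

lemma memAM_le_one (hA : IsAlg 𝒜) {M : Set (Set Ω → ℝ)} (hM : ∀ μ ∈ M, IsFinAdd 𝒜 μ)
    {m : Set Ω → ℝ} (hm : MemAM 𝒜 M m) {A : Set Ω} (hAm : A ∈ 𝒜) : m A ≤ 1 := by
  obtain ⟨μ, α, hμ, hα, hs, hval⟩ := hm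
  rw [hval A, ← hs.tsum_eq]
  apply Summable.tsum_le_tsum (fun n => ?_) (memAM_summable hA hM hμ hα hs hAm) hs.summable
  calc α n * nvar 𝒜 (μ n) A ≤ α n * 1 :=
        mul_le_mul_of_nonneg_left (nvar_le_one hA (hM _ (hμ n)) hAm) (hα n)
    _ = α n := mul_one _

lemma memAM_isFinAdd (hA : IsAlg 𝒜) {M : Set (Set Ω → ℝ)} (hM : ∀ μ ∈ M, IsFinAdd 𝒜 μ)
    {m : Set Ω → ℝ} (hm : MemAM 𝒜 M m) : IsFinAdd 𝒜 m := by
  obtain ⟨μ, α, hμ, hα, hs, hval⟩ := hm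
  refine ⟨?_, ?_, 1, fun A hAm => ?_⟩
  · rw [hval ∅]
    have : (fun n => α n * nvar 𝒜 (μ n) (∅ : Set Ω)) = fun _ => 0 := by
      funext n; rw [nvar_empty hA (hM _ (hμ n)), mul_zero]
    rw [this, tsum_zero]
  · intro A hAm B hBm hd
    rw [hval (A ∪ B), hval A, hval B]
    have : (fun n => α n * nvar 𝒜 (μ n) (A ∪ B)) =
        fun n => α n * nvar 𝒜 (μ n) A + α n * nvar 𝒜 (μ n) B := by
      funext n
      rw [nvar_union hA (hM _ (hμ n)) hAm hBm hd, mul_add]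
    rw [this, Summable.tsum_add (memAM_summable hA hM hμ hα hs hAm) (memAM_summable hA hM hμ hα hs hBm)]
  · rw [abs_le]
    constructor
    · have := memAM_nonneg hA hM ⟨μ, α, hμ, hα, hs, hval⟩ A hAm
      linarith
    · exact memAM_le_one hA hM ⟨μ, α, hμ, hα, hs, hval⟩ hAm

end HSAux2
section HSAux2b
variable {Ω : Type*} {𝒜 : Set (Set Ω)}
lemma nvar_mono (hA : IsAlg 𝒜) {μ : Set Ω → ℝ} (hμ : IsFinAdd 𝒜 μ) {A B : Set Ω}
    (hAm : A ∈ 𝒜) (hBm : B ∈ 𝒜) (hAB : A ⊆ B) : nvar 𝒜 μ A ≤ nvar 𝒜 μ B := by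
  rw [nvar, nvar]
  have hd : (0:ℝ) < 1 ⊔ tvNorm 𝒜 μ := lt_of_lt_of_le one_pos le_sup_left
  exact div_le_div_of_nonneg_right (tv_mono hA hμ hAm hBm hAB) hd.le
end HSAux2b

section HSAux3

variable {Ω : Type*}

/-- sup over `E ∈ 𝒜` of `l E - c * m E`. -/
noncomputable def tcAux (𝒜 : Set (Set Ω)) (l m : Set Ω → ℝ) (c : ℝ) : ℝ :=
  sSup {x | ∃ E ∈ 𝒜, x = l E - c * m E}

/-- inf over `c > 0` of `tcAux`: the "mass of l singular to m". -/
noncomputable def TAux (𝒜 : Set (Set Ω)) (l m : Set Ω → ℝ) : ℝ :=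
  sInf {x | ∃ c : ℝ, 0 < c ∧ x = tcAux 𝒜 l m c}

variable {𝒜 : Set (Set Ω)} {l m : Set Ω → ℝ}

lemma tc_set_nonempty (hA : IsAlg 𝒜) (hl : IsFinAdd 𝒜 l) (hm0 : m ∅ = 0) (c : ℝ) :
    (0:ℝ) ∈ {x | ∃ E ∈ 𝒜, x = l E - c * m E} :=
  ⟨∅, alg_empty hA, by rw [hl.1, hm0, mul_zero, sub_zero]⟩

lemma tc_set_bddAbove (hA : IsAlg 𝒜) (hl : IsFinAdd 𝒜 l) (hlp : IsPos 𝒜 l)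
    (hmp : IsPos 𝒜 m) {c : ℝ} (hc : 0 ≤ c) :
    BddAbove {x | ∃ E ∈ 𝒜, x = l E - c * m E} := by
  refine ⟨l Set.univ, fun x hx => ?_⟩
  obtain ⟨E, hE, rfl⟩ := hx
  have h1 : l E ≤ l Set.univ := pos_mono hA hl hlp hE (alg_univ hA) (Set.subset_univ E)
  have h2 : 0 ≤ c * m E := mul_nonneg hc (hmp E hE)
  linarith

lemma le_tc (hA : IsAlg 𝒜) (hl : IsFinAdd 𝒜 l) (hlp : IsPos 𝒜 l) (hmp : IsPos 𝒜 m)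
    {c : ℝ} (hc : 0 ≤ c) {E : Set Ω} (hE : E ∈ 𝒜) :
    l E - c * m E ≤ tcAux 𝒜 l m c :=
  le_csSup (tc_set_bddAbove hA hl hlp hmp hc) ⟨E, hE, rfl⟩

lemma tc_nonneg (hA : IsAlg 𝒜) (hl : IsFinAdd 𝒜 l) (hlp : IsPos 𝒜 l) (hm0 : m ∅ = 0)
    (hmp : IsPos 𝒜 m) {c : ℝ} (hc : 0 ≤ c) : 0 ≤ tcAux 𝒜 l m c :=
  le_csSup (tc_set_bddAbove hA hl hlp hmp hc) (tc_set_nonempty hA hl hm0 c)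

lemma T_set_nonempty (𝒜 : Set (Set Ω)) (l m : Set Ω → ℝ) :
    {x | ∃ c : ℝ, 0 < c ∧ x = tcAux 𝒜 l m c}.Nonempty :=
  ⟨tcAux 𝒜 l m 1, 1, one_pos, rfl⟩

lemma T_set_bddBelow (hA : IsAlg 𝒜) (hl : IsFinAdd 𝒜 l) (hlp : IsPos 𝒜 l) (hm0 : m ∅ = 0)
    (hmp : IsPos 𝒜 m) : BddBelow {x | ∃ c : ℝ, 0 < c ∧ x = tcAux 𝒜 l m c} := by
  refine ⟨0, fun x hx => ?_⟩
  obtain ⟨c, hc, rfl⟩ := hx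
  exact tc_nonneg hA hl hlp hm0 hmp hc.le

lemma T_nonneg (hA : IsAlg 𝒜) (hl : IsFinAdd 𝒜 l) (hlp : IsPos 𝒜 l) (hm0 : m ∅ = 0)
    (hmp : IsPos 𝒜 m) : 0 ≤ TAux 𝒜 l m :=
  le_csInf (T_set_nonempty 𝒜 l m) fun x hx => by
    obtain ⟨c, hc, rfl⟩ := hx; exact tc_nonneg hA hl hlp hm0 hmp hc.le

lemma T_le_tc (hA : IsAlg 𝒜) (hl : IsFinAdd 𝒜 l) (hlp : IsPos 𝒜 l) (hm0 : m ∅ = 0)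
    (hmp : IsPos 𝒜 m) {c : ℝ} (hc : 0 < c) : TAux 𝒜 l m ≤ tcAux 𝒜 l m c :=
  csInf_le (T_set_bddBelow hA hl hlp hm0 hmp) ⟨c, hc, rfl⟩

/-- comparison: if `w * m' ≤ m` on `𝒜` with `w > 0`, then `TAux l m ≤ TAux l m'`. -/
lemma T_mono (hA : IsAlg 𝒜) (hl : IsFinAdd 𝒜 l) (hlp : IsPos 𝒜 l)
    {m m' : Set Ω → ℝ} (hm0 : m ∅ = 0) (hmp : IsPos 𝒜 m) (hm0' : m' ∅ = 0)
    (hmp' : IsPos 𝒜 m') {w : ℝ} (hw : 0 < w)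
    (hle : ∀ E ∈ 𝒜, w * m' E ≤ m E) : TAux 𝒜 l m ≤ TAux 𝒜 l m' := by
  apply le_csInf (T_set_nonempty 𝒜 l m')
  rintro x ⟨c, hc, rfl⟩
  calc TAux 𝒜 l m ≤ tcAux 𝒜 l m (c / w) :=
        T_le_tc hA hl hlp hm0 hmp (div_pos hc hw)
    _ ≤ tcAux 𝒜 l m' c := by
        apply csSup_le ⟨0, tc_set_nonempty hA hl hm0 (c / w)⟩
        rintro x ⟨E, hE, rfl⟩
        have h1 : l E - c * m' E ≤ tcAux 𝒜 l m' c := le_tc hA hl hlp hmp' hc.le hE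
        have h2 : (c / w) * (w * m' E) = c * m' E := by
          field_simp
        have h3 : (c / w) * (w * m' E) ≤ (c / w) * m E :=
          mul_le_mul_of_nonneg_left (hle E hE) (div_pos hc hw).le
        linarith

end HSAux3

/-- Halmos–Savage: M is dominated iff M ≪ m for some m ∈ 𝐀(M). -/
theorem halmos_savage {Ω : Type*} (𝒜 : Set (Set Ω)) (hA : IsAlg 𝒜)
    (M : Set (Set Ω → ℝ)) (hM : ∀ μ ∈ M, IsFinAdd 𝒜 μ) (hne : M.Nonempty) :
    (∃ l : Set Ω → ℝ, IsFinAdd 𝒜 l ∧ IsPos 𝒜 l ∧ ∀ μ ∈ M, AC 𝒜 μ l) ↔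
    (∃ m : Set Ω → ℝ, MemAM 𝒜 M m ∧ ∀ μ ∈ M, AC 𝒜 μ m) := by
  constructor
  · rintro ⟨l, hl, hlp, hdom⟩
    set L := l Set.univ with hLdef
    have hL0 : 0 ≤ L := hlp _ (alg_univ hA)
    set Tset : Set ℝ := {x | ∃ m, MemAM 𝒜 M m ∧ x = TAux 𝒜 l m} with hTsetdef
    have hTbdd : BddBelow Tset := by
      refine ⟨0, ?_⟩
      rintro x ⟨m, hm, rfl⟩
      exact T_nonneg hA hl hlp (memAM_isFinAdd hA hM hm).1 (memAM_nonneg hA hM hm)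
    have hTne : Tset.Nonempty := by
      obtain ⟨μ₀, hμ₀⟩ := hne
      refine ⟨TAux 𝒜 l (fun A => ∑' n : ℕ, (if n = 0 then (1:ℝ) else 0) * nvar 𝒜 μ₀ A),
        ⟨_, ⟨fun _ => μ₀, fun n => if n = 0 then 1 else 0, fun _ => hμ₀,
          fun n => by by_cases h : n = 0 <;> simp [h], hasSum_ite_eq 0 1, fun A => rfl⟩, rfl⟩⟩
    set tstar := sInf Tset with htstardef
    have htstar0 : 0 ≤ tstar := le_csInf hTne fun x hx => by
      obtain ⟨m, hm, rfl⟩ := hx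
      exact T_nonneg hA hl hlp (memAM_isFinAdd hA hM hm).1 (memAM_nonneg hA hM hm)
    -- choose an approximating sequence for the infimum
    have hchoice : ∀ k : ℕ, ∃ m, MemAM 𝒜 M m ∧ TAux 𝒜 l m < tstar + 1/((k:ℝ)+1) := by
      intro k
      have hpos : (0:ℝ) < 1/((k:ℝ)+1) := by positivity
      have h : sInf Tset < tstar + 1/((k:ℝ)+1) := by rw [← htstardef]; linarith only [hpos]
      obtain ⟨x, hx, hlt⟩ := exists_lt_of_csInf_lt hTne h
      obtain ⟨m, hm, rfl⟩ := hx
      exact ⟨m, hm, hlt⟩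
    choose mk hmk htk using hchoice
    choose μs αs h1 h2 h3 h4 using hmk
    have hmkAM : ∀ k, MemAM 𝒜 M (mk k) := fun k => ⟨μs k, αs k, h1 k, h2 k, h3 k, h4 k⟩
    -- the countable convex combination m*
    set w : ℕ → ℝ := fun k => 1/2/2^k with hwdef
    have hw0 : ∀ k, (0:ℝ) < w k := fun k => by rw [hwdef]; positivity
    have hwsum : HasSum w 1 := hasSum_geometric_two' 1
    set e : ℕ ≃ ℕ × ℕ := (Denumerable.eqv (ℕ × ℕ)).symm with hedef
    set α' : ℕ → ℝ := fun n => w (e n).1 * αs (e n).1 (e n).2 with hα'def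
    set μ' : ℕ → Set Ω → ℝ := fun n => μs (e n).1 (e n).2 with hμ'def
    set mstar : Set Ω → ℝ := fun A => ∑' n, α' n * nvar 𝒜 (μ' n) A with hmstardef
    have hβnn : ∀ p : ℕ × ℕ, 0 ≤ w p.1 * αs p.1 p.2 :=
      fun p => mul_nonneg (hw0 _).le (h2 _ _)
    have hrow : ∀ k, HasSum (fun j => w k * αs k j) (w k) := by
      intro k
      simpa using (h3 k).mul_left (w k)
    have hβsummable : Summable (fun p : ℕ × ℕ => w p.1 * αs p.1 p.2) := by
      rw [summable_prod_of_nonneg hβnn]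
      refine ⟨fun k => (hrow k).summable, ?_⟩
      have hr : (fun k => ∑' j, w k * αs k j) = w := funext fun k => (hrow k).tsum_eq
      rw [hr]; exact hwsum.summable
    have hβ1 : HasSum (fun p : ℕ × ℕ => w p.1 * αs p.1 p.2) 1 := by
      have ht := hβsummable.hasSum
      rw [Summable.tsum_prod' hβsummable (fun k => (hrow k).summable)] at ht
      have hr : ∀ k, ∑' j, w k * αs k j = w k := fun k => (hrow k).tsum_eq
      simp only [hr] at ht
      rwa [hwsum.tsum_eq] at ht
    have hα'1 : HasSum α' 1 := by
      have h := (Equiv.hasSum_iff (f := fun p : ℕ × ℕ => w p.1 * αs p.1 p.2) e).mpr hβ1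
      rw [hα'def]
      exact h
    have hα'0 : ∀ n, 0 ≤ α' n := fun n => hβnn (e n)
    have hμ'M : ∀ n, μ' n ∈ M := fun n => h1 _ _
    have hmstarAM : MemAM 𝒜 M mstar := ⟨μ', α', hμ'M, hα'0, hα'1, fun A => by rw [hmstardef]⟩
    have hmstarFA : IsFinAdd 𝒜 mstar := memAM_isFinAdd hA hM hmstarAM
    have hmstarP : IsPos 𝒜 mstar := memAM_nonneg hA hM hmstarAM
    -- value of m* on 𝒜
    have hWsummable : ∀ A ∈ 𝒜, Summable (fun k => w k * mk k A) := by
      intro A hAm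
      apply Summable.of_nonneg_of_le
        (fun k => mul_nonneg (hw0 k).le (memAM_nonneg hA hM (hmkAM k) A hAm))
        (fun k => ?_) hwsum.summable
      calc w k * mk k A ≤ w k * 1 :=
            mul_le_mul_of_nonneg_left (memAM_le_one hA hM (hmkAM k) hAm) (hw0 k).le
        _ = w k := mul_one _
    have hval : ∀ A ∈ 𝒜, mstar A = ∑' k, w k * mk k A := by
      intro A hAm
      have hFrow : ∀ k, Summable (fun j => w k * αs k j * nvar 𝒜 (μs k j) A) := by
        intro k
        apply Summable.of_nonneg_of_le
          (fun j => mul_nonneg (hβnn (k, j)) (nvar_nonneg hA (hM _ (h1 k j)) hAm))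
          (fun j => ?_) (hrow k).summable
        calc w k * αs k j * nvar 𝒜 (μs k j) A ≤ w k * αs k j * 1 :=
              mul_le_mul_of_nonneg_left (nvar_le_one hA (hM _ (h1 k j)) hAm) (hβnn (k, j))
          _ = w k * αs k j := mul_one _
      have hFrowsum : ∀ k, (∑' j, w k * αs k j * nvar 𝒜 (μs k j) A) = w k * mk k A := by
        intro k
        have hassoc : (fun j => w k * αs k j * nvar 𝒜 (μs k j) A) =
            fun j => w k * (αs k j * nvar 𝒜 (μs k j) A) := funext fun j => mul_assoc _ _ _
        rw [hassoc, tsum_mul_left, ← h4 k A]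
      have hFsummable : Summable (fun p : ℕ × ℕ => w p.1 * αs p.1 p.2 * nvar 𝒜 (μs p.1 p.2) A) := by
        rw [summable_prod_of_nonneg
          (fun p => mul_nonneg (hβnn p) (nvar_nonneg hA (hM _ (h1 p.1 p.2)) hAm))]
        refine ⟨fun k => hFrow k, ?_⟩
        have hr : (fun k => ∑' j, w k * αs k j * nvar 𝒜 (μs k j) A) =
            fun k => w k * mk k A := funext fun k => hFrowsum k
        rw [hr]; exact hWsummable A hAm
      calc mstar A = ∑' n, (fun p : ℕ × ℕ => w p.1 * αs p.1 p.2 * nvar 𝒜 (μs p.1 p.2) A) (e n) := by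
            rw [hmstardef]
        _ = ∑' p : ℕ × ℕ, w p.1 * αs p.1 p.2 * nvar 𝒜 (μs p.1 p.2) A := Equiv.tsum_eq e
            (fun p : ℕ × ℕ => w p.1 * αs p.1 p.2 * nvar 𝒜 (μs p.1 p.2) A)
        _ = ∑' k, ∑' j, w k * αs k j * nvar 𝒜 (μs k j) A := Summable.tsum_prod' hFsummable hFrow
        _ = ∑' k, w k * mk k A := tsum_congr fun k => hFrowsum k
    have hmk_le : ∀ k, ∀ E ∈ 𝒜, w k * mk k E ≤ mstar E := by
      intro k E hE
      rw [hval E hE]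
      exact Summable.le_tsum (hWsummable E hE) k
        (fun j _ => mul_nonneg (hw0 j).le (memAM_nonneg hA hM (hmkAM j) E hE))
    -- T m* = t*
    have hT1 : tstar ≤ TAux 𝒜 l mstar := csInf_le hTbdd ⟨mstar, hmstarAM, rfl⟩
    have hT2 : ∀ k : ℕ, TAux 𝒜 l mstar ≤ TAux 𝒜 l (mk k) := fun k =>
      T_mono hA hl hlp hmstarFA.1 hmstarP (memAM_isFinAdd hA hM (hmkAM k)).1
        (memAM_nonneg hA hM (hmkAM k)) (hw0 k) (fun E hE => hmk_le k E hE)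
    have hTeq : TAux 𝒜 l mstar = tstar := by
      refine le_antisymm ?_ hT1
      apply le_of_forall_pos_le_add
      intro ε hε
      obtain ⟨k, hk⟩ := exists_nat_one_div_lt hε
      have h := le_trans (hT2 k) (htk k).le
      linarith only [h, hk]
    -- the key claim
    have claim : ∀ μ₀ ∈ M, ∀ ε > (0:ℝ), ∃ δ > (0:ℝ),
        ∀ E ∈ 𝒜, mstar E < δ → nvar 𝒜 μ₀ E < ε := by
      intro μ₀ hμ₀M ε hε
      by_contra hcon
      push_neg at hcon
      have hμ₀ := hM μ₀ hμ₀M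
      have hd0 : (0:ℝ) < 1 ⊔ tvNorm 𝒜 μ₀ := nvar_denom_pos μ₀
      obtain ⟨δ₀, hδ₀0, hδ₀⟩ := hdom μ₀ hμ₀M (ε/2 * (1 ⊔ tvNorm 𝒜 μ₀)) (by positivity)
      have hνl : ∀ E ∈ 𝒜, l E < δ₀ → nvar 𝒜 μ₀ E < ε/2 := by
        intro E hE hlE
        have h := hδ₀ E hE (by rwa [tv_pos_eq hA hl hlp hE])
        rw [tv_eq_nvar μ₀ E] at h
        have h2 : (1 ⊔ tvNorm 𝒜 μ₀) * nvar 𝒜 μ₀ E < (1 ⊔ tvNorm 𝒜 μ₀) * (ε/2) := by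
          linarith only [h]
        exact (mul_lt_mul_iff_right₀ hd0).mp h2
      -- interleave μ₀ into m*
      set β : ℕ → ℝ := fun n => if n = 0 then 1/2 else α' (n-1) / 2 with hβdef
      set μν : ℕ → Set Ω → ℝ := fun n => if n = 0 then μ₀ else μ' (n-1) with hμνdef
      set m' : Set Ω → ℝ := fun A => ∑' n, β n * nvar 𝒜 (μν n) A with hm'def
      have hβ0 : ∀ n, 0 ≤ β n := by
        intro n; rw [hβdef]
        dsimp only; split
        · norm_num
        · have := hα'0 (n-1); positivity
      have hβ1 : HasSum β 1 := by
        have hs : HasSum (fun n => β (n+1)) (1/2 : ℝ) := by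
          have hfe : (fun n => β (n+1)) = fun n => α' n / 2 := by
            funext n; rw [hβdef]; simp
          rw [hfe]
          simpa using hα'1.div_const 2
        have h := (hasSum_nat_add_iff (f := β) 1).mp hs
        have hβzero : β 0 = (1/2 : ℝ) := by rw [hβdef]; norm_num
        simp only [Finset.range_one, Finset.sum_singleton, hβzero] at h
        norm_num at h
        exact h
      have hμνM : ∀ n, μν n ∈ M := by
        intro n; rw [hμνdef]
        dsimp only; split
        · exact hμ₀M
        · exact hμ'M _
      have hm'AM : MemAM 𝒜 M m' := ⟨μν, β, hμνM, hβ0, hβ1, fun A => by rw [hm'def]⟩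
      have hm'FA : IsFinAdd 𝒜 m' := memAM_isFinAdd hA hM hm'AM
      have hm'val : ∀ A ∈ 𝒜, m' A = 1/2 * nvar 𝒜 μ₀ A + 1/2 * mstar A := by
        intro A hAm
        have hsumm : Summable (fun n => β n * nvar 𝒜 (μν n) A) :=
          memAM_summable hA hM hμνM hβ0 hβ1 hAm
        rw [hm'def]
        dsimp only
        rw [Summable.tsum_eq_zero_add hsumm]
        have h0 : β 0 * nvar 𝒜 (μν 0) A = 1/2 * nvar 𝒜 μ₀ A := by
          rw [hβdef, hμνdef]; norm_num
        have hsucc : (fun n => β (n+1) * nvar 𝒜 (μν (n+1)) A) =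
            fun n => 1/2 * (α' n * nvar 𝒜 (μ' n) A) := by
          funext n; rw [hβdef, hμνdef]; simp; ring
        rw [h0, hsucc, tsum_mul_left, hmstardef]
      have hTm' : tstar ≤ TAux 𝒜 l m' := csInf_le hTbdd ⟨m', hm'AM, rfl⟩
      -- the sequence Eₙ
      have hEn : ∀ n : ℕ, ∃ E ∈ 𝒜, tstar - 1/((n:ℝ)+1) <
          l E - ((n:ℝ)+1) * nvar 𝒜 μ₀ E - ((n:ℝ)+1) * mstar E := by
        intro n
        have hc' : (0:ℝ) < 2*((n:ℝ)+1) := by positivity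
        have hle : tstar ≤ tcAux 𝒜 l m' (2*((n:ℝ)+1)) :=
          le_trans hTm' (T_le_tc hA hl hlp hm'FA.1 (memAM_nonneg hA hM hm'AM) hc')
        have hlt : tstar - 1/((n:ℝ)+1) < tcAux 𝒜 l m' (2*((n:ℝ)+1)) := by
          have : (0:ℝ) < 1/((n:ℝ)+1) := by positivity
          linarith only [hle, this]
        obtain ⟨x, hx, hxlt⟩ := exists_lt_of_lt_csSup
          ⟨0, tc_set_nonempty hA hl hm'FA.1 (2*((n:ℝ)+1))⟩ hlt
        obtain ⟨E, hE, rfl⟩ := hx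
        refine ⟨E, hE, ?_⟩
        have heq : l E - 2*((n:ℝ)+1) * m' E =
            l E - ((n:ℝ)+1) * nvar 𝒜 μ₀ E - ((n:ℝ)+1) * mstar E := by
          rw [hm'val E hE]; ring
        rw [heq] at hxlt
        exact hxlt
      -- the contradiction
      have hkey : ∀ c : ℝ, 0 < c → tstar + δ₀/4 ≤ tcAux 𝒜 l mstar c := by
        intro c hc
        obtain ⟨n, hn⟩ := exists_nat_gt (max (max (4/δ₀) ((L+1)/(ε/2))) (c*(L+1)/(δ₀/4)))
        have hn1 : (0:ℝ) < (n:ℝ)+1 := by positivity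
        have hna : 4/δ₀ < (n:ℝ)+1 := by
          have h := le_trans (le_max_left (4/δ₀) ((L+1)/(ε/2)))
            (le_max_left (max (4/δ₀) ((L+1)/(ε/2))) (c*(L+1)/(δ₀/4)))
          linarith only [h, hn]
        have hnb : (L+1)/(ε/2) < (n:ℝ)+1 := by
          have h := le_trans (le_max_right (4/δ₀) ((L+1)/(ε/2)))
            (le_max_left (max (4/δ₀) ((L+1)/(ε/2))) (c*(L+1)/(δ₀/4)))
          linarith only [h, hn]
        have hnc : c*(L+1)/(δ₀/4) < (n:ℝ)+1 := by
          have h := le_max_right (max (4/δ₀) ((L+1)/(ε/2))) (c*(L+1)/(δ₀/4))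
          linarith only [h, hn]
        obtain ⟨E, hE, hElt⟩ := hEn n
        have hνE0 : 0 ≤ nvar 𝒜 μ₀ E := nvar_nonneg hA hμ₀ hE
        have hmE0 : 0 ≤ mstar E := hmstarP E hE
        have hlEL : l E ≤ L := pos_mono hA hl hlp hE (alg_univ hA) (Set.subset_univ E)
        have hrecip : 1/((n:ℝ)+1) ≤ 1 := by
          rw [div_le_one hn1]; linarith
        -- bounds on nvar μ₀ E and mstar E
        have hpos1 : 0 ≤ ((n:ℝ)+1) * nvar 𝒜 μ₀ E := mul_nonneg hn1.le hνE0
        have hpos2 : 0 ≤ ((n:ℝ)+1) * mstar E := mul_nonneg hn1.le hmE0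
        have hb : ((n:ℝ)+1) * nvar 𝒜 μ₀ E + ((n:ℝ)+1) * mstar E ≤ L + 1 := by
          have h := hElt
          linarith only [h, hlEL, htstar0, hrecip]
        have hbν : ((n:ℝ)+1) * nvar 𝒜 μ₀ E ≤ L + 1 := by linarith only [hb, hpos2]
        have hbm : ((n:ℝ)+1) * mstar E ≤ L + 1 := by linarith only [hb, hpos1]
        have hνE : nvar 𝒜 μ₀ E < ε/2 := by
          have h2 : L+1 < (ε/2) * ((n:ℝ)+1) := by
            rw [div_lt_iff₀ (by positivity : (0:ℝ) < ε/2)] at hnb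
            linarith only [hnb]
          have h3 : nvar 𝒜 μ₀ E * ((n:ℝ)+1) < (ε/2) * ((n:ℝ)+1) := by
            linarith only [hbν, h2]
          exact lt_of_mul_lt_mul_right h3 hn1.le
        have hmEc : c * mstar E < δ₀/4 := by
          have h2 : c*(L+1) < (δ₀/4) * ((n:ℝ)+1) := by
            rw [div_lt_iff₀ (by positivity : (0:ℝ) < δ₀/4)] at hnc
            linarith only [hnc]
          have h4 : c * (((n:ℝ)+1) * mstar E) ≤ c * (L+1) :=
            mul_le_mul_of_nonneg_left hbm hc.le
          have h3 : c * mstar E * ((n:ℝ)+1) < (δ₀/4) * ((n:ℝ)+1) := by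
            linarith only [h4, h2]
          exact lt_of_mul_lt_mul_right h3 hn1.le
        have h1n : 1/((n:ℝ)+1) < δ₀/4 := by
          rw [div_lt_iff₀ hn1]
          rw [div_lt_iff₀ hδ₀0] at hna
          linarith only [hna]
        -- the bad set F
        obtain ⟨F, hF, hFm, hFν⟩ := hcon (δ₀/(4*c)) (by positivity)
        -- ν (F \ E) > ε/2, hence l (F \ E) ≥ δ₀
        have hFE : F ∩ E ∈ 𝒜 := alg_inter hA hF hE
        have hFdE : F \ E ∈ 𝒜 := alg_diff hA hF hE
        have hdisj : Disjoint (F ∩ E) (F \ E) :=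
          Set.disjoint_of_subset_left Set.inter_subset_right Set.disjoint_sdiff_right
        have hFsplit : F = (F ∩ E) ∪ (F \ E) := (Set.inter_union_diff F E).symm
        have hνadd : nvar 𝒜 μ₀ F = nvar 𝒜 μ₀ (F ∩ E) + nvar 𝒜 μ₀ (F \ E) := by
          conv_lhs => rw [hFsplit]
          exact nvar_union hA hμ₀ hFE hFdE hdisj
        have hνmono : nvar 𝒜 μ₀ (F ∩ E) ≤ nvar 𝒜 μ₀ E :=
          nvar_mono hA hμ₀ hFE hE Set.inter_subset_right
        have hνFdE : ε/2 < nvar 𝒜 μ₀ (F \ E) := by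
          linarith only [hFν, hνadd, hνmono, hνE]
        have hlFdE : δ₀ ≤ l (F \ E) := by
          by_contra hcon2
          push_neg at hcon2
          exact absurd (hνl _ hFdE hcon2) (not_lt.mpr hνFdE.le)
        have hEdisj : Disjoint E (F \ E) := Set.disjoint_sdiff_right
        have hladd : l (E ∪ (F \ E)) = l E + l (F \ E) := hl.2.1 E hE _ hFdE hEdisj
        have hmadd : mstar (E ∪ (F \ E)) = mstar E + mstar (F \ E) :=
          hmstarFA.2.1 E hE _ hFdE hEdisj
        have hmFdE : mstar (F \ E) ≤ mstar F :=
          pos_mono hA hmstarFA hmstarP hFdE hF Set.diff_subset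
        have hG : E ∪ (F \ E) ∈ 𝒜 := alg_union hA hE hFdE
        have htc := le_tc hA hl hlp hmstarP hc.le hG
        rw [hladd, hmadd] at htc
        have hdist : c * (mstar E + mstar (F \ E)) = c * mstar E + c * mstar (F \ E) :=
          mul_add c _ _
        have hcm : c * mstar (F \ E) ≤ c * mstar F := mul_le_mul_of_nonneg_left hmFdE hc.le
        have hcmF : c * mstar F < δ₀/4 := by
          calc c * mstar F < c * (δ₀/(4*c)) := mul_lt_mul_of_pos_left hFm hc
            _ = δ₀/4 := by field_simp
        linarith only [htc, hdist, hcm, hcmF, hmEc, h1n, hElt, hlFdE, hpos1, hpos2]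
      have hTge : tstar + δ₀/4 ≤ TAux 𝒜 l mstar := by
        apply le_csInf (T_set_nonempty 𝒜 l mstar)
        rintro x ⟨c, hc, rfl⟩
        exact hkey c hc
      rw [hTeq] at hTge
      linarith only [hTge, hδ₀0]
    refine ⟨mstar, hmstarAM, ?_⟩
    intro μ₀ hμ₀M ε hε
    have hd0 : (0:ℝ) < 1 ⊔ tvNorm 𝒜 μ₀ := nvar_denom_pos μ₀
    obtain ⟨δ, hδ0, hδ⟩ := claim μ₀ hμ₀M (ε / (1 ⊔ tvNorm 𝒜 μ₀)) (by positivity)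
    refine ⟨δ, hδ0, fun E hE hlt => ?_⟩
    have hmE : mstar E < δ := by rwa [tv_pos_eq hA hmstarFA hmstarP hE] at hlt
    have h2 := hδ E hE hmE
    rw [tv_eq_nvar μ₀ E]
    calc (1 ⊔ tvNorm 𝒜 μ₀) * nvar 𝒜 μ₀ E
        < (1 ⊔ tvNorm 𝒜 μ₀) * (ε / (1 ⊔ tvNorm 𝒜 μ₀)) := mul_lt_mul_of_pos_left h2 hd0
      _ = ε := mul_div_cancel₀ ε hd0.ne'
  · rintro ⟨m, hmAM, hdomm⟩
    exact ⟨m, memAM_isFinAdd hA hM hmAM, memAM_nonneg hA hM hmAM, hdomm⟩
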